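/- The function h is coercive (radially unbounded): for every C ∈ ℝ there exists R > 0 such that for all (α1, α2) ∈ ℝ² with √(α1² + α2²) > R one has h(α1, α2) > C; equivalently, h(α1, α2) tends to +∞ as ‖(α1, α2)‖ tends to +∞. (Proposition 1 of the paper; it requires that (v1, v2) ≠ (0, 0).) -/

import Mathlib

open Matrix

open scoped MatrixOrder in
lemma posdef_key {N : ℕ} {M : Matrix (Fin N) (Fin N) ℝ} (hM : M.PosDef) :
    ∃ c : ℝ, 0 < c ∧
      (∀ a b : Fin N → ℝ, (a ⬝ᵥ (M *ᵥ b)) ^ 2 ≤ (a ⬝ᵥ (M *ᵥ a)) * (b ⬝ᵥ (M *ᵥ b))) ∧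
      (∀ x : Fin N → ℝ, c * (x ⬝ᵥ x) ≤ x ⬝ᵥ (M *ᵥ x)) := by
  have hps := hM.posSemidef
  set B := CFC.sqrt M with hBdef
  have hBB : B * B = M := CFC.sqrt_mul_sqrt_self M hps.nonneg
  have hsym : Bᵀ = B := by
    have h := (CFC.sqrt_nonneg M).posSemidef.1
    rwa [Matrix.IsHermitian, conjTranspose_eq_transpose_of_trivial] at h
  have hdot : ∀ a b : Fin N → ℝ, a ⬝ᵥ (M *ᵥ b) = (B *ᵥ a) ⬝ᵥ (B *ᵥ b) := by
    intro a b
    rw [← hBB, ← Matrix.mulVec_mulVec, Matrix.dotProduct_mulVec, ← Matrix.mulVec_transpose, hsym]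
  have hCS : ∀ a b : Fin N → ℝ,
      (a ⬝ᵥ (M *ᵥ b)) ^ 2 ≤ (a ⬝ᵥ (M *ᵥ a)) * (b ⬝ᵥ (M *ᵥ b)) := by
    intro a b
    rw [hdot, hdot, hdot]
    have := Finset.sum_mul_sq_le_sq_mul_sq Finset.univ (B *ᵥ a) (B *ᵥ b)
    simpa [dotProduct, pow_two] using this
  have hdetB : IsUnit B.det := by
    have h1 : B.det * B.det = M.det := by rw [← Matrix.det_mul, hBB]
    have h2 := hM.det_pos
    refine isUnit_iff_ne_zero.mpr fun h => ?_
    rw [h, mul_zero] at h1; linarith [h1 ▸ h2]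
  have hinv : B⁻¹ * B = 1 := Matrix.nonsing_inv_mul B hdetB
  have hx : ∀ x : Fin N → ℝ, B⁻¹ *ᵥ (B *ᵥ x) = x := by
    intro x; rw [Matrix.mulVec_mulVec, hinv, Matrix.one_mulVec]
  set K : ℝ := ∑ i, ∑ j, (B⁻¹ i j) ^ 2 with hKdef
  have hK0 : 0 ≤ K := Finset.sum_nonneg fun i _ => Finset.sum_nonneg fun j _ => sq_nonneg _
  refine ⟨1 / (K + 1), by positivity, hCS, ?_⟩
  intro x
  set y := B *ᵥ x with hy
  have hxy : x = B⁻¹ *ᵥ y := (hx x).symm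
  have hy0 : 0 ≤ y ⬝ᵥ y := by
    simp only [dotProduct]
    exact Finset.sum_nonneg fun i _ => mul_self_nonneg _
  have expand : ∀ (u : Fin N → ℝ), u ⬝ᵥ u = ∑ i, u i ^ 2 := by
    intro u; simp [dotProduct, pow_two]
  have h1 : x ⬝ᵥ x ≤ K * (y ⬝ᵥ y) := by
    rw [hxy, expand, expand, hKdef, Finset.sum_mul]
    apply Finset.sum_le_sum
    intro i _
    have h := Finset.sum_mul_sq_le_sq_mul_sq Finset.univ (fun j => B⁻¹ i j) y
    simpa [Matrix.mulVec, dotProduct] using h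
  have h2 : x ⬝ᵥ x ≤ (K + 1) * (y ⬝ᵥ y) := by nlinarith
  have h3 : 1 / (K + 1) * (x ⬝ᵥ x) ≤ 1 / (K + 1) * ((K + 1) * (y ⬝ᵥ y)) :=
    mul_le_mul_of_nonneg_left h2 (by positivity)
  have h4 : 1 / (K + 1) * ((K + 1) * (y ⬝ᵥ y)) = y ⬝ᵥ y := by field_simp
  rw [hdot x x, ← hy]
  linarith

/-- The objective function `h(α1, α2)` from the paper. -/
noncomputable def hfun {N : ℕ} (S : Matrix (Fin N) (Fin N) ℝ) (z1 z2 v1 v2 : Fin N → ℝ)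
    (α1 α2 : ℝ) : ℝ :=
  (1 + (z1 - (α1 • v1 - α2 • v2)) ⬝ᵥ (S⁻¹ *ᵥ (z1 - (α1 • v1 - α2 • v2)))) *
  (1 + (z2 - (α1 • v2 + α2 • v1)) ⬝ᵥ (S⁻¹ *ᵥ (z2 - (α1 • v2 + α2 • v1)))) -
  ((z1 - (α1 • v1 - α2 • v2)) ⬝ᵥ (S⁻¹ *ᵥ (z2 - (α1 • v2 + α2 • v1)))) ^ 2

set_option maxHeartbeats 1000000 in
/-- Proposition 1: `h` is coercive (radially unbounded). -/
theorem hfun_coercive {N : ℕ} (hN : 1 ≤ N)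
    (S : Matrix (Fin N) (Fin N) ℝ) (hS : S.PosDef)
    (z1 z2 v1 v2 : Fin N → ℝ) (hv : (v1, v2) ≠ (0, 0)) :
    ∀ C : ℝ, ∃ R : ℝ, 0 < R ∧ ∀ α1 α2 : ℝ,
      Real.sqrt (α1 ^ 2 + α2 ^ 2) > R → hfun S z1 z2 v1 v2 α1 α2 > C := by
  intro C
  have hM : (S⁻¹).PosDef := hS.inv
  obtain ⟨c, hc, hCS, hlow⟩ := posdef_key hM
  have dsn : ∀ u : Fin N → ℝ, 0 ≤ u ⬝ᵥ u :=
    fun u => Finset.sum_nonneg fun i _ => mul_self_nonneg _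
  have hcv : 0 < v1 ⬝ᵥ v1 + v2 ⬝ᵥ v2 := by
    rcases lt_or_eq_of_le (add_nonneg (dsn v1) (dsn v2)) with h | h
    · exact h
    · exfalso
      have h1 : v1 ⬝ᵥ v1 = 0 := by linarith [dsn v1, dsn v2]
      have h2 : v2 ⬝ᵥ v2 = 0 := by linarith [dsn v1, dsn v2]
      exact hv (Prod.ext (dotProduct_self_eq_zero.mp h1) (dotProduct_self_eq_zero.mp h2))
  have hKz0 : 0 ≤ z1 ⬝ᵥ z1 + z2 ⬝ᵥ z2 := add_nonneg (dsn z1) (dsn z2)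
  refine ⟨1 + Real.sqrt (max 0 ((C - 1 + c * (z1 ⬝ᵥ z1 + z2 ⬝ᵥ z2)) * 2 /
      (c * (v1 ⬝ᵥ v1 + v2 ⬝ᵥ v2)))), by positivity, ?_⟩
  intro α1 α2 hR
  show (1 + (z1 - (α1 • v1 - α2 • v2)) ⬝ᵥ (S⁻¹ *ᵥ (z1 - (α1 • v1 - α2 • v2)))) *
    (1 + (z2 - (α1 • v2 + α2 • v1)) ⬝ᵥ (S⁻¹ *ᵥ (z2 - (α1 • v2 + α2 • v1)))) -
    ((z1 - (α1 • v1 - α2 • v2)) ⬝ᵥ (S⁻¹ *ᵥ (z2 - (α1 • v2 + α2 • v1)))) ^ 2 > C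
  set m1 : Fin N → ℝ := α1 • v1 - α2 • v2 with hm1
  set m2 : Fin N → ℝ := α1 • v2 + α2 • v1 with hm2
  set a : Fin N → ℝ := z1 - m1 with ha
  set b : Fin N → ℝ := z2 - m2 with hb
  have hq1 := hlow a
  have hq2 := hlow b
  have hcs := hCS a b
  have hq10 : 0 ≤ c * (a ⬝ᵥ a) := mul_nonneg hc.le (dsn a)
  have hq20 : 0 ≤ c * (b ⬝ᵥ b) := mul_nonneg hc.le (dsn b)
  have haa : m1 ⬝ᵥ m1 / 2 - z1 ⬝ᵥ z1 ≤ a ⬝ᵥ a := by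
    simp only [ha, dotProduct, Pi.sub_apply]
    rw [Finset.sum_div, ← Finset.sum_sub_distrib]
    apply Finset.sum_le_sum
    intro i _
    nlinarith [sq_nonneg (2 * z1 i - m1 i)]
  have hbb : m2 ⬝ᵥ m2 / 2 - z2 ⬝ᵥ z2 ≤ b ⬝ᵥ b := by
    simp only [hb, dotProduct, Pi.sub_apply]
    rw [Finset.sum_div, ← Finset.sum_sub_distrib]
    apply Finset.sum_le_sum
    intro i _
    nlinarith [sq_nonneg (2 * z2 i - m2 i)]
  have hmm : c * (m1 ⬝ᵥ m1) + c * (m2 ⬝ᵥ m2) =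
      (α1 ^ 2 + α2 ^ 2) * (c * (v1 ⬝ᵥ v1 + v2 ⬝ᵥ v2)) := by
    have h0 : m1 ⬝ᵥ m1 + m2 ⬝ᵥ m2 = (α1 ^ 2 + α2 ^ 2) * (v1 ⬝ᵥ v1 + v2 ⬝ᵥ v2) := by
      simp only [hm1, hm2, dotProduct, Pi.sub_apply, Pi.add_apply, Pi.smul_apply, smul_eq_mul]
      rw [← Finset.sum_add_distrib, mul_add, Finset.mul_sum, Finset.mul_sum,
        ← Finset.sum_add_distrib]
      apply Finset.sum_congr rfl
      intro i _
      ring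
    nlinarith [h0]
  have h5 : c * (m1 ⬝ᵥ m1 / 2 - z1 ⬝ᵥ z1) ≤ c * (a ⬝ᵥ a) :=
    mul_le_mul_of_nonneg_left haa hc.le
  have h6 : c * (m2 ⬝ᵥ m2 / 2 - z2 ⬝ᵥ z2) ≤ c * (b ⬝ᵥ b) :=
    mul_le_mul_of_nonneg_left hbb hc.le
  set t : ℝ := max 0 ((C - 1 + c * (z1 ⬝ᵥ z1 + z2 ⬝ᵥ z2)) * 2 /
      (c * (v1 ⬝ᵥ v1 + v2 ⬝ᵥ v2))) with htdef
  have hsq : Real.sqrt t ^ 2 = t := Real.sq_sqrt (le_max_left _ _)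
  have hs : (1 + Real.sqrt t) ^ 2 < α1 ^ 2 + α2 ^ 2 :=
    (Real.lt_sqrt (by positivity)).mp hR
  have htle : (C - 1 + c * (z1 ⬝ᵥ z1 + z2 ⬝ᵥ z2)) * 2 /
      (c * (v1 ⬝ᵥ v1 + v2 ⬝ᵥ v2)) ≤ t := le_max_right _ _
  have hst : (C - 1 + c * (z1 ⬝ᵥ z1 + z2 ⬝ᵥ z2)) * 2 /
      (c * (v1 ⬝ᵥ v1 + v2 ⬝ᵥ v2)) < α1 ^ 2 + α2 ^ 2 := by
    nlinarith [Real.sqrt_nonneg t]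
  have hkey : (C - 1 + c * (z1 ⬝ᵥ z1 + z2 ⬝ᵥ z2)) * 2 <
      (α1 ^ 2 + α2 ^ 2) * (c * (v1 ⬝ᵥ v1 + v2 ⬝ᵥ v2)) :=
    (div_lt_iff₀ (by positivity)).mp hst
  nlinarith [hq1, hq2, hcs, hq10, hq20, h5, h6, hmm, hkey]
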